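/- Let Ẑ ∈ S_{++}^d, Γ ∈ S_+^d, Γ ≠ 0, ρ > 0, and let γ* > λ_max(Γ) satisfy ρ² = ⟨Ẑ, (I - γ*(γ*I - Γ)^{-1})²⟩. Then L* = (γ*)² (γ*I - Γ)^{-1} Ẑ (γ*I - Γ)^{-1} satisfies the Gelbrich constraint with equality: G(L*, Ẑ) = ρ, and L* ⪰ λ_min(Ẑ) I. -/

import Mathlib

open Matrix

lemma psd_smul' {d : ℕ} {A : Matrix (Fin d) (Fin d) ℝ} (hA : A.PosSemidef) {c : ℝ}
    (hc : 0 ≤ c) : (c • A).PosSemidef := by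
  refine ⟨?_, fun x => ?_⟩
  · unfold Matrix.IsHermitian
    rw [conjTranspose_smul, hA.1.eq, star_trivial]
  · exact (hA.smul hc).2 x

lemma smul_one_sub_psd {d : ℕ} {A : Matrix (Fin d) (Fin d) ℝ} (hA : A.IsHermitian) {c : ℝ}
    (hc : ∀ i, hA.eigenvalues i ≤ c) :
    (c • (1 : Matrix (Fin d) (Fin d) ℝ) - A).PosSemidef := by
  classical
  set U : Matrix (Fin d) (Fin d) ℝ := (hA.eigenvectorUnitary : Matrix (Fin d) (Fin d) ℝ) with hUdef
  have hU : U * star U = 1 := mem_unitaryGroup_iff.mp hA.eigenvectorUnitary.2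
  have hspec : A = U * diagonal (RCLike.ofReal ∘ hA.eigenvalues) * star U := hA.spectral_theorem
  have key : c • (1 : Matrix (Fin d) (Fin d) ℝ) - A
      = U * diagonal (fun i => c - hA.eigenvalues i) * Uᴴ := by
    have hdiag : diagonal (fun i => c - hA.eigenvalues i)
        = c • (1 : Matrix (Fin d) (Fin d) ℝ) - diagonal (RCLike.ofReal ∘ hA.eigenvalues) := by
      rw [smul_one_eq_diagonal, diagonal_sub]
      simp [Function.comp]
    rw [← star_eq_conjTranspose, hdiag, Matrix.mul_sub, Matrix.sub_mul, Matrix.mul_smul,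
      Matrix.smul_mul, mul_one, hU, ← hspec]
  rw [key]
  exact (posSemidef_diagonal_iff.mpr fun i => sub_nonneg.mpr (hc i)).mul_mul_conjTranspose_same U

lemma sub_smul_one_psd {d : ℕ} {A : Matrix (Fin d) (Fin d) ℝ} (hA : A.IsHermitian) {c : ℝ}
    (hc : ∀ i, c ≤ hA.eigenvalues i) :
    (A - c • (1 : Matrix (Fin d) (Fin d) ℝ)).PosSemidef := by
  classical
  set U : Matrix (Fin d) (Fin d) ℝ := (hA.eigenvectorUnitary : Matrix (Fin d) (Fin d) ℝ) with hUdef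
  have hU : U * star U = 1 := mem_unitaryGroup_iff.mp hA.eigenvectorUnitary.2
  have hspec : A = U * diagonal (RCLike.ofReal ∘ hA.eigenvalues) * star U := hA.spectral_theorem
  have key : A - c • (1 : Matrix (Fin d) (Fin d) ℝ)
      = U * diagonal (fun i => hA.eigenvalues i - c) * Uᴴ := by
    have hdiag : diagonal (fun i => hA.eigenvalues i - c)
        = diagonal (RCLike.ofReal ∘ hA.eigenvalues) - c • (1 : Matrix (Fin d) (Fin d) ℝ) := by
      rw [smul_one_eq_diagonal, diagonal_sub]
      simp [Function.comp]
    rw [← star_eq_conjTranspose, hdiag, Matrix.mul_sub, Matrix.sub_mul, Matrix.mul_smul,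
      Matrix.smul_mul, mul_one, hU, ← hspec]
  rw [key]
  exact (posSemidef_diagonal_iff.mpr fun i => sub_nonneg.mpr (hc i)).mul_mul_conjTranspose_same U


/-- The positive semidefinite square root of a matrix (zero if the matrix is
not positive semidefinite). -/
noncomputable def psdSqrt {d : ℕ} (A : Matrix (Fin d) (Fin d) ℝ) :
    Matrix (Fin d) (Fin d) ℝ := by
  classical exact if h : A.PosSemidef then
    (h.1.eigenvectorUnitary : Matrix (Fin d) (Fin d) ℝ) *
      diagonal ((↑) ∘ (√·) ∘ h.1.eigenvalues) *
      (star h.1.eigenvectorUnitary : Matrix (Fin d) (Fin d) ℝ) else 0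

open scoped MatrixOrder in
lemma psdSqrt_eq_cfc {d : ℕ} {A : Matrix (Fin d) (Fin d) ℝ} (h : A.PosSemidef) :
    psdSqrt A = CFC.sqrt A := by
  rw [CFC.sqrt_eq_real_sqrt A h.nonneg, cfcₙ_eq_cfc, h.1.cfc_eq]
  unfold psdSqrt
  rw [dif_pos h]
  simp [Matrix.IsHermitian.cfc, Unitary.conjStarAlgAut_apply, Function.comp_def]

open scoped MatrixOrder in
lemma psdSqrt_psd {d : ℕ} {A : Matrix (Fin d) (Fin d) ℝ} (h : A.PosSemidef) :
    (psdSqrt A).PosSemidef := by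
  rw [psdSqrt_eq_cfc h]; exact (CFC.sqrt_nonneg A).posSemidef

open scoped MatrixOrder in
lemma psdSqrt_mul_self' {d : ℕ} {A : Matrix (Fin d) (Fin d) ℝ} (h : A.PosSemidef) :
    psdSqrt A * psdSqrt A = A := by
  rw [psdSqrt_eq_cfc h]; exact CFC.sqrt_mul_sqrt_self A h.nonneg

open scoped MatrixOrder in
lemma psdSqrt_unique' {d : ℕ} {A C : Matrix (Fin d) (Fin d) ℝ} (hC : C.PosSemidef)
    (h : A.PosSemidef) (hsq : C ^ 2 = A) : C = psdSqrt A := by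
  rw [psdSqrt_eq_cfc h]
  exact (CFC.sqrt_unique (by rw [← sq]; exact hsq) hC.nonneg).symm

/-- The Gelbrich distance between covariance matrices. -/
noncomputable def gelbrich {d : ℕ} (S1 S2 : Matrix (Fin d) (Fin d) ℝ) : ℝ :=
  Real.sqrt (S1 + S2 - (2 : ℝ) • psdSqrt (psdSqrt S2 * S1 * psdSqrt S2)).trace

/-- The largest eigenvalue of a Hermitian matrix. -/
noncomputable def lamMax {d : ℕ} (Γ : Matrix (Fin d) (Fin d) ℝ)
    (hΓ : Γ.IsHermitian) : ℝ :=
  ⨆ i, hΓ.eigenvalues i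

/-- The smallest eigenvalue of a Hermitian matrix. -/
noncomputable def lamMin {d : ℕ} (Z : Matrix (Fin d) (Fin d) ℝ)
    (hZ : Z.IsHermitian) : ℝ :=
  ⨅ i, hZ.eigenvalues i

/-- If `γ⋆ > λ_max(Γ)` satisfies `ρ² = ⟨Ẑ, (I - γ⋆(γ⋆I - Γ)⁻¹)²⟩`, then
`L⋆ = (γ⋆)² (γ⋆I - Γ)⁻¹ Ẑ (γ⋆I - Γ)⁻¹` attains the Gelbrich constraint with
equality, `G(L⋆, Ẑ) = ρ`, and satisfies `L⋆ ⪰ λ_min(Ẑ) I`. -/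
theorem oracle_solution_properties {d : ℕ}
    (Zh Γ : Matrix (Fin d) (Fin d) ℝ)
    (hZh : Zh.PosDef) (hΓ : Γ.PosSemidef) (hΓne : Γ ≠ 0)
    (ρ : ℝ) (hρ : 0 < ρ) (γs : ℝ) (hγs : γs > lamMax Γ hΓ.1)
    (hroot : ρ ^ 2 = (Zhᵀ * ((1 : Matrix (Fin d) (Fin d) ℝ)
      - γs • (γs • (1 : Matrix (Fin d) (Fin d) ℝ) - Γ)⁻¹) ^ 2).trace) :
    gelbrich (γs ^ 2 • ((γs • (1 : Matrix (Fin d) (Fin d) ℝ) - Γ)⁻¹ * Zh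
        * (γs • (1 : Matrix (Fin d) (Fin d) ℝ) - Γ)⁻¹)) Zh = ρ ∧
    (γs ^ 2 • ((γs • (1 : Matrix (Fin d) (Fin d) ℝ) - Γ)⁻¹ * Zh
        * (γs • (1 : Matrix (Fin d) (Fin d) ℝ) - Γ)⁻¹)
      - lamMin Zh hZh.1 • (1 : Matrix (Fin d) (Fin d) ℝ)).PosSemidef := by
  classical
  rcases isEmpty_or_nonempty (Fin d) with he | hne
  · exact absurd (Subsingleton.elim Γ 0) hΓne
  -- basic eigenvalue bounds
  have hbdd : ∀ i, hΓ.1.eigenvalues i ≤ lamMax Γ hΓ.1 :=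
    fun i => le_ciSup (Set.Finite.bddAbove (Set.finite_range _)) i
  have hγpos : 0 < γs :=
    lt_of_le_of_lt (le_trans (hΓ.eigenvalues_nonneg (Classical.arbitrary _))
      (hbdd _)) hγs
  -- M and its inverse
  set M : Matrix (Fin d) (Fin d) ℝ := γs • (1 : Matrix (Fin d) (Fin d) ℝ) - Γ with hMdef
  have hM : M.PosDef := by
    have h1 : ((γs - lamMax Γ hΓ.1) • (1 : Matrix (Fin d) (Fin d) ℝ)).PosDef := by
      rw [smul_one_eq_diagonal]
      exact posDef_diagonal_iff.mpr fun i => sub_pos.mpr hγs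
    have h2 : ((lamMax Γ hΓ.1) • (1 : Matrix (Fin d) (Fin d) ℝ) - Γ).PosSemidef :=
      smul_one_sub_psd hΓ.1 hbdd
    have h3 : M = (γs - lamMax Γ hΓ.1) • (1 : Matrix (Fin d) (Fin d) ℝ)
        + ((lamMax Γ hΓ.1) • (1 : Matrix (Fin d) (Fin d) ℝ) - Γ) := by
      rw [hMdef]; module
    rw [h3]
    exact h1.add_posSemidef h2
  have hMdet : IsUnit M.det := (isUnit_iff_isUnit_det M).mp hM.isUnit
  have hMl : M * M⁻¹ = 1 := mul_nonsing_inv M hMdet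
  have hMr : M⁻¹ * M = 1 := nonsing_inv_mul M hMdet
  have hMinv : M⁻¹.PosDef := hM.inv
  set B : Matrix (Fin d) (Fin d) ℝ := γs • M⁻¹ with hBdef
  have hBps : B.PosSemidef := psd_smul' hMinv.posSemidef hγpos.le
  have hBh : Bᴴ = B := hBps.1
  -- square root of Zh
  have hZps : Zh.PosSemidef := hZh.posSemidef
  set S : Matrix (Fin d) (Fin d) ℝ := psdSqrt Zh with hSdef
  have hS : S.PosSemidef := psdSqrt_psd hZps
  have hSh : Sᴴ = S := hS.1
  have hS2 : S * S = Zh := psdSqrt_mul_self' hZps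
  have hpsdZ : psdSqrt Zh = S := hSdef.symm
  set L : Matrix (Fin d) (Fin d) ℝ := γs ^ 2 • (M⁻¹ * Zh * M⁻¹) with hLdef
  have hLB : L = B * Zh * B := by
    rw [hLdef, hBdef, Matrix.smul_mul, Matrix.smul_mul, Matrix.mul_smul, smul_smul, pow_two]
  -- the square root matrix C
  set C : Matrix (Fin d) (Fin d) ℝ := S * B * S with hCdef
  clear_value M B S L C
  have hC : C.PosSemidef := by
    rw [hCdef]
    have := hBps.mul_mul_conjTranspose_same S
    rwa [hSh] at this
  have hCsq : C ^ 2 = S * L * S := by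
    rw [pow_two, hCdef, hLB, ← hS2]
    simp only [Matrix.mul_assoc]
  have hSLS : (S * L * S).PosSemidef := hCsq ▸ hC.pow 2
  have hpsdC : psdSqrt (S * L * S) = C := by
    exact (psdSqrt_unique' hC hSLS hCsq).symm
  -- trace computation
  have hZt : Zhᵀ = Zh := by
    rw [← conjTranspose_eq_transpose_of_trivial, hZh.1.eq]
  have hLtr : L.trace = (Zh * (B * B)).trace := by
    rw [hLB, trace_mul_comm (B * Zh) B, ← Matrix.mul_assoc, trace_mul_comm (B * B) Zh]
  have hCtr : C.trace = (Zh * B).trace := by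
    rw [hCdef, trace_mul_comm (S * B) S, ← Matrix.mul_assoc, hS2]
  have hexp : ((1 : Matrix (Fin d) (Fin d) ℝ) - B) ^ 2
      = 1 - B - B + B * B := by noncomm_ring
  have h2C : ((2 : ℝ) • C).trace = 2 * C.trace := by rw [trace_smul, smul_eq_mul]
  have e2 : (Zhᵀ * ((1 : Matrix (Fin d) (Fin d) ℝ) - B) ^ 2).trace
      = Zh.trace - (Zh * B).trace - (Zh * B).trace + (Zh * (B * B)).trace := by
    rw [hZt, hexp]
    simp only [Matrix.mul_add, Matrix.mul_sub, Matrix.mul_one, trace_add, trace_sub]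
  have htr : (L + Zh - (2 : ℝ) • C).trace = ρ ^ 2 := by
    rw [hroot, e2, trace_sub, trace_add, hLtr, h2C, hCtr]
    ring
  constructor
  · show Real.sqrt (L + Zh - (2:ℝ) • psdSqrt (psdSqrt Zh * L * psdSqrt Zh)).trace = ρ
    rw [hpsdZ, hpsdC, htr, Real.sqrt_sq hρ.le]
  · -- positive semidefiniteness part
    set μ : ℝ := lamMin Zh hZh.1 with hμdef
    have hμle : ∀ i, μ ≤ hZh.1.eigenvalues i :=
      fun i => ciInf_le (Set.Finite.bddBelow (Set.finite_range _)) i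
    have hμpos : 0 ≤ μ :=
      le_ciInf fun i => (hZh.eigenvalues_pos i).le
    set T : Matrix (Fin d) (Fin d) ℝ := psdSqrt Γ with hTdef
    clear_value T
    have hT2 : T * T = Γ := by rw [hTdef]; exact psdSqrt_mul_self' hΓ
    have hTh : Tᴴ = T := by rw [hTdef]; exact (psdSqrt_psd hΓ).1
    have hK2 : ((2 * γs) • (1 : Matrix (Fin d) (Fin d) ℝ) - Γ).PosSemidef :=
      smul_one_sub_psd hΓ.1 fun i => (hbdd i).trans (by linarith)
    have hK : (T * ((2 * γs) • (1 : Matrix (Fin d) (Fin d) ℝ) - Γ) * T).PosSemidef := by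
      have := hK2.mul_mul_conjTranspose_same T
      rwa [hTh] at this
    have hTgT : T * Γ * T = Γ * Γ := by rw [← hT2]; noncomm_ring
    have hLHS : T * ((2 * γs) • (1 : Matrix (Fin d) (Fin d) ℝ) - Γ) * T
        = (2 * γs) • Γ - Γ * Γ := by
      rw [Matrix.mul_sub, Matrix.sub_mul, Matrix.mul_smul, Matrix.mul_one, Matrix.smul_mul,
        hT2, hTgT]
    have hMM : M * M = γs ^ 2 • (1 : Matrix (Fin d) (Fin d) ℝ) - (2 * γs) • Γ + Γ * Γ := by
      simp only [hMdef, Matrix.sub_mul, Matrix.mul_sub, Matrix.smul_mul, Matrix.mul_smul,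
        Matrix.one_mul, Matrix.mul_one, smul_smul]
      module
    have hKeq : T * ((2 * γs) • (1 : Matrix (Fin d) (Fin d) ℝ) - Γ) * T
        = γs ^ 2 • (1 : Matrix (Fin d) (Fin d) ℝ) - M * M := by
      rw [hLHS, hMM]
      module
    have h5 : M⁻¹ * (M * M) * M⁻¹ = 1 := by
      rw [← Matrix.mul_assoc, hMr, Matrix.one_mul, hMl]
    have h6 : M⁻¹ * (γs ^ 2 • (1 : Matrix (Fin d) (Fin d) ℝ)) * M⁻¹ = B * B := by
      simp only [hBdef, Matrix.mul_smul, Matrix.smul_mul, Matrix.mul_one, smul_smul, pow_two]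
    have hBB : M⁻¹ * (γs ^ 2 • (1 : Matrix (Fin d) (Fin d) ℝ) - M * M) * M⁻¹ = B * B - 1 := by
      rw [Matrix.mul_sub, Matrix.sub_mul, h5, h6]
    have hBB1 : (B * B - 1).PosSemidef := by
      rw [← hBB, ← hKeq]
      have := hK.mul_mul_conjTranspose_same M⁻¹
      rwa [hMinv.1.eq] at this
    have hZmin : (Zh - μ • (1 : Matrix (Fin d) (Fin d) ℝ)).PosSemidef :=
      sub_smul_one_psd hZh.1 hμle
    have hconj : (B * (Zh - μ • (1 : Matrix (Fin d) (Fin d) ℝ)) * B).PosSemidef := by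
      have := hZmin.mul_mul_conjTranspose_same B
      rwa [hBh] at this
    have h7 : B * (μ • (1 : Matrix (Fin d) (Fin d) ℝ)) * B = μ • (B * B) := by
      rw [Matrix.mul_smul, Matrix.mul_one, Matrix.smul_mul]
    have hfinal : B * (Zh - μ • (1 : Matrix (Fin d) (Fin d) ℝ)) * B + μ • (B * B - 1)
        = L - μ • (1 : Matrix (Fin d) (Fin d) ℝ) := by
      rw [Matrix.mul_sub, Matrix.sub_mul, h7, smul_sub, hLB]
      abel
    show (L - μ • (1 : Matrix (Fin d) (Fin d) ℝ)).PosSemidef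
    rw [← hfinal]
    exact hconj.add (psd_smul' hBB1 hμpos)
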